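/- If L > 0 belongs to the critical set 𝒩*, then 2L belongs to the critical set 𝒩†. -/

import Mathlib

/-- The critical set 𝒩* of Glass and Guerrero. -/
def criticalNStar : Set ℝ :=
  {L : ℝ | 0 < L ∧ ∃ a b : ℂ,
    a * Complex.exp a = b * Complex.exp b ∧
    b * Complex.exp b = -(a + b) * Complex.exp (-(a + b)) ∧
    (L : ℂ) ^ 2 = -(a ^ 2 + a * b + b ^ 2)}

/-- The new critical set 𝒩†. -/
def criticalNDagger : Set ℝ :=
  {L : ℝ | 0 < L ∧ ∃ a b : ℂ,
    a ^ 2 * Complex.exp a = b ^ 2 * Complex.exp b ∧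
    b ^ 2 * Complex.exp b = (a + b) ^ 2 * Complex.exp (-(a + b)) ∧
    (L : ℂ) ^ 2 = -(a ^ 2 + a * b + b ^ 2)}

lemma exp_two_mul (z : ℂ) : Complex.exp (2 * z) = Complex.exp z * Complex.exp z := by
  rw [two_mul, Complex.exp_add]

theorem stmt16 (L : ℝ) (hL : 0 < L) (hmem : L ∈ criticalNStar) :
    2 * L ∈ criticalNDagger := by
  obtain ⟨-, a, b, h1, h2, h3⟩ := hmem
  refine ⟨by linarith, 2 * a, 2 * b, ?_, ?_, ?_⟩
  · have h := congrArg (· ^ 2) h1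
    calc (2 * a) ^ 2 * Complex.exp (2 * a)
        = 4 * ((a * Complex.exp a) ^ 2) := by rw [exp_two_mul]; ring
      _ = 4 * ((b * Complex.exp b) ^ 2) := by rw [h1]
      _ = (2 * b) ^ 2 * Complex.exp (2 * b) := by rw [exp_two_mul]; ring
  · calc (2 * b) ^ 2 * Complex.exp (2 * b)
        = 4 * ((b * Complex.exp b) ^ 2) := by rw [exp_two_mul]; ring
      _ = 4 * ((-(a + b) * Complex.exp (-(a + b))) ^ 2) := by rw [h2]
      _ = (2 * a + 2 * b) ^ 2 * Complex.exp (-(2 * a + 2 * b)) := by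
          have : -(2 * a + 2 * b) = 2 * (-(a + b)) := by ring
          rw [this, exp_two_mul]; ring
  · push_cast
    rw [mul_pow, h3]
    ring
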